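/- With c, Γ, R defined from the Heisenberg frame as in the context, R 0 i j k = 0 for all i, j, k ∈ {1,2,3,4} (i.e. every curvature component whose first index is 0 and whose remaining three indices are nonzero vanishes); this is the curvature condition R⁻₀ = 0 of the real slice of the Ren–Wang spacetime. -/
import Mathlib


open Finset

/-- Commutation coefficients of the standard frame of the 5-dimensional real
Heisenberg group: the only nonzero ones are `c 1 2 0 = 2`, `c 2 1 0 = −2`,
`c 4 3 0 = 2`, `c 3 4 0 = −2`. -/
def heisC (i j k : Fin 5) : ℝ :=
  if i = 1 ∧ j = 2 ∧ k = 0 then 2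
  else if i = 2 ∧ j = 1 ∧ k = 0 then -2
  else if i = 4 ∧ j = 3 ∧ k = 0 then 2
  else if i = 3 ∧ j = 4 ∧ k = 0 then -2
  else 0

/-- Christoffel symbols `Γ k i j = ½(c k j i + c k i j + c i j k)`. -/
noncomputable def heisGamma (k i j : Fin 5) : ℝ :=
  (1 / 2) * (heisC k j i + heisC k i j + heisC i j k)

/-- Curvature components
`R l k i j = Σ_m (Γ m j k·Γ l i m − Γ m i k·Γ l j m) − Σ_m c i j m·Γ l m k`. -/
noncomputable def heisR (l k i j : Fin 5) : ℝ :=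
  (∑ m : Fin 5, (heisGamma m j k * heisGamma l i m - heisGamma m i k * heisGamma l j m))
    - ∑ m : Fin 5, heisC i j m * heisGamma l m k

/-- Ricci tensor `Ric i j = Σ_k R i k j k`. -/
noncomputable def heisRic (i j : Fin 5) : ℝ := ∑ k : Fin 5, heisR i k j k

lemma heisC_third_ne (i j m : Fin 5) (hm : m ≠ 0) : heisC i j m = 0 := by
  simp only [heisC]
  split_ifs with h1 h2 h3 h4 <;> first | rfl | exact absurd (by tauto) hm

lemma heisGamma_0_a_0 (a : Fin 5) : heisGamma 0 a 0 = 0 := by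
  fin_cases a <;> simp [heisGamma, heisC]

lemma heisGamma_0_0_a (a : Fin 5) : heisGamma 0 0 a = 0 := by
  fin_cases a <;> simp [heisGamma, heisC]

lemma heisGamma_ne (m a b : Fin 5) (hm : m ≠ 0) (ha : a ≠ 0) (hb : b ≠ 0) :
    heisGamma m a b = 0 := by
  simp only [heisGamma, heisC_third_ne _ _ _ hb, heisC_third_ne _ _ _ ha,
    heisC_third_ne _ _ _ hm]
  ring

/-- Every curvature component of the Heisenberg frame whose first index is 0
and whose remaining three indices are nonzero vanishes: the curvature
condition `R⁻₀ = 0` of the real slice of the Ren–Wang spacetime. -/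
theorem heisenberg_R_zero_minus_vanishes :
    ∀ i j k : Fin 5, i ≠ 0 → j ≠ 0 → k ≠ 0 → heisR 0 i j k = 0 := by
  intro i j k hi hj hk
  have h1 : ∀ m : Fin 5, heisGamma m k i * heisGamma 0 j m
      - heisGamma m j i * heisGamma 0 k m = 0 := by
    intro m
    by_cases hm : m = 0
    · subst hm; rw [heisGamma_0_a_0, heisGamma_0_a_0]; ring
    · rw [heisGamma_ne m k i hm hk hi, heisGamma_ne m j i hm hj hi]; ring
  have h2 : ∀ m : Fin 5, heisC j k m * heisGamma 0 m i = 0 := by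
    intro m
    by_cases hm : m = 0
    · subst hm; rw [heisGamma_0_0_a]; ring
    · rw [heisC_third_ne _ _ _ hm]; ring
  simp only [heisR, h1, h2, Finset.sum_const_zero, sub_zero]
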